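/- Let X be a complex Banach space and S a multiplicative semigroup of bounded operators on X such that rank[S,T] ≤ 1 for all S, T ∈ S. Suppose [A,B] = y ⊗ φ for some A, B ∈ S with y ∈ X and φ ∈ X* nonzero. Then φ(Cy) = 0 for every C ∈ S and also φ(y) = 0. -/

import Mathlib

open ContinuousLinearMap

set_option linter.unusedSectionVars false
set_option maxHeartbeats 1000000

namespace Stmt2Aux

variable {X : Type*} [NormedAddCommGroup X] [NormedSpace ℂ X] [CompleteSpace X]

lemma mul_sr (T : X →L[ℂ] X) (ξ : X →L[ℂ] ℂ) (w : X) :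
    T * ξ.smulRight w = ξ.smulRight (T w) := by
  ext x; simp

lemma sr_mul (T : X →L[ℂ] X) (ξ : X →L[ℂ] ℂ) (w : X) :
    ξ.smulRight w * T = (ξ.comp T).smulRight w := by
  ext x; simp


/-- linear independence helper -/
lemma indep_pair {a b : X} (hb : b ≠ 0) (hab : ∀ c : ℂ, a ≠ c • b) :
    ∀ p q : ℂ, p • a + q • b = 0 → p = 0 ∧ q = 0 := by
  intro p q hpq
  by_cases hp : p = 0
  · subst hp
    simp only [zero_smul, zero_add, smul_eq_zero] at hpq
    exact ⟨rfl, hpq.resolve_right hb⟩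
  · exfalso
    apply hab (-(q/p))
    have : a = p⁻¹ • (-(q • b)) := by
      rw [eq_inv_smul_iff₀ hp]
      linear_combination (norm := module) hpq
    rw [this, smul_neg, smul_smul, neg_smul]
    congr 1
    field_simp

/-- rank-one representation -/
lemma rank1_rep (T : X →L[ℂ] X) (h : LinearMap.rank (T : X →ₗ[ℂ] X) ≤ 1) :
    ∃ (w : X) (ξ : X →L[ℂ] ℂ), T = ξ.smulRight w := by
  rw [LinearMap.rank] at h
  obtain ⟨v₀, hv₀⟩ := rank_le_one_iff.mp h
  by_cases hw : (v₀ : X) = 0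
  · refine ⟨0, 0, ?_⟩
    ext x
    obtain ⟨r, hr⟩ := hv₀ ⟨T x, LinearMap.mem_range_self _ x⟩
    have : r • (v₀ : X) = T x := congrArg Subtype.val hr
    simp [← this, hw]
  · obtain ⟨ζ, -, hζx⟩ := exists_dual_vector ℂ (v₀ : X) (norm_ne_zero_iff.mpr hw)
    have hζw : ζ (v₀ : X) ≠ 0 := by
      rw [hζx]; simpa using hw
    refine ⟨(v₀ : X), (ζ (v₀ : X))⁻¹ • (ζ.comp T), ?_⟩
    ext x
    obtain ⟨r, hr⟩ := hv₀ ⟨T x, LinearMap.mem_range_self _ x⟩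
    have hrw : r • (v₀ : X) = T x := congrArg Subtype.val hr
    simp only [smulRight_apply, smul_apply, comp_apply, smul_eq_mul]
    rw [← hrw]
    rw [map_smul]
    simp only [smul_eq_mul]
    congr 1
    field_simp

/-- if no point separates, functionals are proportional -/
lemma func_prop {α β : X →L[ℂ] ℂ} (hα : α ≠ 0)
    (h : ∀ x, α x = 0 → β x = 0) : ∃ c : ℂ, β = c • α := by
  have : ¬ ∀ x, α x = 0 := fun hh => hα (by ext x; simp [hh x])
  push_neg at this
  obtain ⟨x₀, hx₀⟩ := this
  refine ⟨β x₀ / α x₀, ?_⟩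
  ext x
  have hker : α (x - (α x / α x₀) • x₀) = 0 := by
    simp [map_sub, map_smul]
    field_simp
    ring
  have := h _ hker
  simp only [map_sub, map_smul, smul_eq_mul, smul_apply] at this ⊢
  field_simp at this ⊢
  linear_combination this

lemma dich_of_rep {a b w : X} {α β ξ : X →L[ℂ] ℂ} (hb : b ≠ 0) (hα : α ≠ 0)
    (hrep : α.smulRight a + β.smulRight b = ξ.smulRight w) :
    (∃ c : ℂ, a = c • b) ∨ (∃ c : ℂ, β = c • α) := by
  by_contra hcon
  push_neg at hcon
  obtain ⟨h1, h2⟩ := hcon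
  have hsep : ¬ ∀ x, α x = 0 → β x = 0 := by
    intro hh
    obtain ⟨c, hc⟩ := func_prop hα hh
    exact h2 c hc
  push_neg at hsep
  obtain ⟨x₁, hx₁α, hx₁β⟩ := hsep
  have hαne : ¬ ∀ x, α x = 0 := fun hh => hα (by ext x; simp [hh x])
  push_neg at hαne
  obtain ⟨x₀, hx₀⟩ := hαne
  have e₁ : α x₁ • a + β x₁ • b = ξ x₁ • w := by
    have := DFunLike.congr_fun hrep x₁; simpa using this
  have e₀ : α x₀ • a + β x₀ • b = ξ x₀ • w := by
    have := DFunLike.congr_fun hrep x₀; simpa using this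
  rw [hx₁α, zero_smul, zero_add] at e₁
  -- b = (ξ x₁ / β x₁) • w
  have hbw : b = (ξ x₁ / β x₁) • w := by
    rw [div_eq_mul_inv, mul_comm, mul_smul]
    rw [eq_inv_smul_iff₀ hx₁β]
    exact e₁
  have ha : a = ((ξ x₀ - β x₀ * (ξ x₁ / β x₁)) / α x₀) • w := by
    rw [div_eq_mul_inv, mul_comm, mul_smul, eq_inv_smul_iff₀ hx₀]
    rw [hbw, smul_smul] at e₀
    linear_combination (norm := module) e₀
  have hκ : (ξ x₁ / β x₁) ≠ 0 := by
    intro h0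
    rw [h0, zero_smul] at hbw
    exact hb hbw
  have hξ1 : ξ x₁ ≠ 0 := by
    intro h0; exact hκ (by rw [h0]; simp)
  apply h1 ((ξ x₀ - β x₀ * (ξ x₁ / β x₁)) / α x₀ / (ξ x₁ / β x₁))
  rw [ha, hbw, smul_smul]
  congr 1
  field_simp

lemma tr1 {α : X →L[ℂ] ℂ} {a : X} (h : α.smulRight a = 0) : α a = 0 := by
  have := DFunLike.congr_fun h a
  simp only [smulRight_apply, zero_apply, smul_eq_zero] at this
  rcases this with h1 | h2
  · exact h1
  · simp [h2]

lemma tr2 {α β : X →L[ℂ] ℂ} {a b : X} (h : α.smulRight a + β.smulRight b = 0) :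
    α a + β b = 0 := by
  by_cases ha : a = 0
  · subst ha
    have hb0 : β.smulRight b = 0 := by
      rw [show α.smulRight (0:X) = 0 by ext x; simp] at h; simpa using h
    simp [tr1 hb0]
  by_cases hba : ∃ c : ℂ, b = c • a
  · obtain ⟨c, rfl⟩ := hba
    have hcomb : (α + c • β).smulRight a = 0 := by
      rw [← h]; ext x; simp [smul_smul, add_smul, mul_comm]
    have := tr1 hcomb
    simp only [add_apply, smul_apply, smul_eq_mul] at this
    simp only [map_smul, smul_eq_mul]
    linear_combination this
  · push_neg at hba
    have hind := indep_pair ha hba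
    have hz : ∀ x, α x = 0 ∧ β x = 0 := by
      intro x
      have := DFunLike.congr_fun h x
      simp only [add_apply, smulRight_apply, zero_apply] at this
      have := hind (β x) (α x) (by linear_combination (norm := module) this)
      exact ⟨this.2, this.1⟩
    simp [(hz a).1, (hz b).2]

lemma tr3 {α β γ : X →L[ℂ] ℂ} {a b c : X}
    (h : α.smulRight a + β.smulRight b + γ.smulRight c = 0) :
    α a + β b + γ c = 0 := by
  by_cases ha : a = 0
  · subst ha
    rw [show α.smulRight (0:X) = 0 by ext x; simp, zero_add] at h
    simp [tr2 h]
  by_cases hba : ∃ p : ℂ, b = p • a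
  · obtain ⟨p, rfl⟩ := hba
    have hcomb : (α + p • β).smulRight a + γ.smulRight c = 0 := by
      rw [← h]; ext x; simp [smul_smul, add_smul, mul_comm]
    have := tr2 hcomb
    simp only [add_apply, smul_apply, smul_eq_mul, map_smul] at this ⊢
    linear_combination this
  · push_neg at hba
    have hind := indep_pair ha hba
    by_cases hc : ∃ p q : ℂ, c = p • a + q • b
    · obtain ⟨p, q, rfl⟩ := hc
      have hcomb : (α + p • γ).smulRight a + (β + q • γ).smulRight b = 0 := by
        rw [← h]; ext x; simp [smul_smul, smul_add, add_smul]
        module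
      have h1 : ∀ x, (α x + p * γ x) = 0 ∧ (β x + q * γ x) = 0 := by
        intro x
        have := DFunLike.congr_fun hcomb x
        simp only [add_apply, smulRight_apply, smul_apply, smul_eq_mul, zero_apply] at this
        have h2 := hind (β x + q * γ x) (α x + p * γ x)
          (by linear_combination (norm := module) this)
        exact ⟨h2.2, h2.1⟩
      have e1 := (h1 a).1
      have e2 := (h1 b).2
      simp only [map_add, map_smul, smul_eq_mul]
      linear_combination e1 + e2
    · push_neg at hc
      have hz : ∀ x, γ x = 0 ∧ α x = 0 ∧ β x = 0 := by
        intro x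
        have hx := DFunLike.congr_fun h x
        simp only [add_apply, smulRight_apply, zero_apply] at hx
        have hγ : γ x = 0 := by
          by_contra hγx
          apply hc (-(α x)/γ x) (-(β x)/γ x)
          have hceq : c = (γ x)⁻¹ • (-(α x • a) - β x • b) := by
            rw [eq_inv_smul_iff₀ hγx]
            linear_combination (norm := module) hx
          rw [hceq]
          match_scalars <;> field_simp
        rw [hγ, zero_smul, add_zero] at hx
        have := hind (β x) (α x) (by linear_combination (norm := module) hx)
        exact ⟨hγ, this.2, this.1⟩
      simp [(hz a).2.1, (hz b).2.2, (hz c).1]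

lemma part1 (𝒮 : Set (X →L[ℂ] X)) (hmul : ∀ S ∈ 𝒮, ∀ T ∈ 𝒮, S * T ∈ 𝒮)
    (hrank : ∀ S ∈ 𝒮, ∀ T ∈ 𝒮,
      LinearMap.rank ((S * T - T * S : X →L[ℂ] X) : X →ₗ[ℂ] X) ≤ 1)
    (U V : X →L[ℂ] X) (hU : U ∈ 𝒮) (hV : V ∈ 𝒮) (w : X) (ξ : X →L[ℂ] ℂ)
    (hc : U * V - V * U = ξ.smulRight w) : ξ w = 0 := by
  by_cases hw : w = 0
  · simp [hw]
  by_cases hξ : ξ = 0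
  · simp [hξ]
  -- pointwise commutator equation
  have hcx : ∀ x : X, U (V x) - V (U x) = ξ x • w := by
    intro x
    have := DFunLike.congr_fun hc x
    simpa using this
  -- the two basic dichotomies
  have idA : (U*U)*V - V*(U*U) = ξ.smulRight (U w) + (ξ.comp U).smulRight w := by
    have e : (U*U)*V - V*(U*U) = U*(U*V - V*U) + (U*V - V*U)*U := by noncomm_ring
    rw [e, hc, mul_sr, sr_mul]
  have dichA : (∃ c : ℂ, U w = c • w) ∨ (∃ c : ℂ, ξ.comp U = c • ξ) := by
    have hr := hrank (U*U) (hmul U hU U hU) V hV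
    rw [idA] at hr
    obtain ⟨w', ξ', hrep⟩ := rank1_rep _ hr
    exact dich_of_rep hw hξ hrep
  have idB : U*(V*V) - (V*V)*U = ξ.smulRight (V w) + (ξ.comp V).smulRight w := by
    have e : U*(V*V) - (V*V)*U = (U*V - V*U)*V + V*(U*V - V*U) := by noncomm_ring
    rw [e, hc, mul_sr, sr_mul, add_comm]
  have dichB : (∃ c : ℂ, V w = c • w) ∨ (∃ c : ℂ, ξ.comp V = c • ξ) := by
    have hr := hrank U hU (V*V) (hmul V hV V hV)
    rw [idB] at hr
    obtain ⟨w', ξ', hrep⟩ := rank1_rep _ hr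
    exact dich_of_rep hw hξ hrep
  -- easy cases
  have caseVV : ∀ lam mu : ℂ, U w = lam • w → V w = mu • w → ξ w = 0 := by
    intro lam mu h1 h2
    have e := hcx w
    rw [h2, h1, map_smul, map_smul, h1, h2] at e
    have : ξ w • w = 0 := by linear_combination (norm := module) -e
    rcases smul_eq_zero.mp this with h | h
    · exact h
    · exact absurd h hw
  have caseFF : ∀ lam mu : ℂ, ξ.comp U = lam • ξ → ξ.comp V = mu • ξ → ξ w = 0 := by
    intro lam mu h1 h2
    have h1x : ∀ x, ξ (U x) = lam * ξ x := by
      intro x; have := DFunLike.congr_fun h1 x; simpa using this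
    have h2x : ∀ x, ξ (V x) = mu * ξ x := by
      intro x; have := DFunLike.congr_fun h2 x; simpa using this
    have e := congrArg ξ (hcx w)
    rw [map_sub, map_smul] at e
    rw [h1x, h2x, h2x, h1x] at e
    simp only [smul_eq_mul] at e
    have : ξ w * ξ w = 0 := by linear_combination -e
    exact mul_self_eq_zero.mp this
  -- the general quartic identity
  have idAB : (U*U)*(V*V) - (V*V)*(U*U)
      = (ξ.comp V).smulRight (U w) + ξ.smulRight (U (V w))
        + ((ξ.comp V).comp U).smulRight w + (ξ.comp U).smulRight (V w) := by
    have e : (U*U)*(V*V) - (V*V)*(U*U)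
        = U*((U*V - V*U)*V) + U*(V*(U*V - V*U))
          + ((U*V - V*U)*V)*U + (V*(U*V - V*U))*U := by noncomm_ring
    rw [e, hc]
    simp only [mul_sr, sr_mul]
  have hrAB := hrank (U*U) (hmul U hU U hU) (V*V) (hmul V hV V hV)
  -- case C3
  have caseC3 : ∀ lam mu : ℂ, U w = lam • w → ξ.comp V = mu • ξ →
      (∀ c : ℂ, V w ≠ c • w) → (∀ c : ℂ, ξ.comp U ≠ c • ξ) → ξ w = 0 := by
    intro lam mu hl hmf hnB1 hnA2
    have hmx : ∀ x, ξ (V x) = mu * ξ x := by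
      intro x; have := DFunLike.congr_fun hmf x; simpa using this
    have hUVw : U (V w) = lam • (V w) + (ξ w) • w := by
      have e := hcx w
      rw [hl, map_smul] at e
      linear_combination (norm := module) e
    have id3 : (U*U)*(V*V) - (V*V)*(U*U)
        = ξ.smulRight ((mu*lam + ξ w) • w + lam • (V w))
          + (ξ.comp U).smulRight (mu • w + V w) := by
      rw [idAB]
      ext x
      simp only [add_apply, smulRight_apply, comp_apply, smul_eq_mul]
      rw [hl, hUVw, hmx, hmx]
      module
    have hr := hrAB
    rw [id3] at hr
    obtain ⟨w', ξ', hrep⟩ := rank1_rep _ hr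
    have hb : mu • w + V w ≠ 0 := by
      intro h0
      exact hnB1 (-mu) (by linear_combination (norm := module) h0)
    rcases dich_of_rep hb hξ hrep with ⟨c, hcc⟩ | ⟨c, hcc⟩
    · have : (lam - c) • (V w) + (mu*lam + ξ w - c*mu) • w = 0 := by
        have : (mu*lam + ξ w) • w + lam • (V w) = c • (mu • w + V w) := hcc
        linear_combination (norm := module) this
      have h2 := indep_pair hw hnB1 _ _ this
      have e1 : lam = c := by linear_combination h2.1
      have e2 := h2.2
      rw [← e1] at e2
      linear_combination e2
    · exact absurd hcc (hnA2 c)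
  -- case C4
  have caseC4 : ∀ lam mu : ℂ, ξ.comp U = lam • ξ → V w = mu • w →
      (∀ c : ℂ, U w ≠ c • w) → (∀ c : ℂ, ξ.comp V ≠ c • ξ) → ξ w = 0 := by
    intro lam mu hlf hm hnA1 hnB2
    have hlx : ∀ x, ξ (U x) = lam * ξ x := by
      intro x; have := DFunLike.congr_fun hlf x; simpa using this
    have hVUx : ∀ x, ξ (V (U x)) = lam * ξ (V x) - ξ x * ξ w := by
      intro x
      have e := congrArg ξ (hcx x)
      rw [map_sub, map_smul] at e
      rw [hlx (V x)] at e
      simp only [smul_eq_mul] at e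
      linear_combination -e
    have id4 : (U*U)*(V*V) - (V*V)*(U*U)
        = (ξ.comp V).smulRight (U w + lam • w)
          + ξ.smulRight (mu • (U w) + (lam*mu - ξ w) • w) := by
      rw [idAB]
      ext x
      simp only [add_apply, smulRight_apply, comp_apply, smul_eq_mul]
      rw [hm, map_smul, hVUx x, hlx x]
      module
    by_cases hb0 : mu • (U w) + (lam*mu - ξ w) • w = 0
    · have h2 := indep_pair hw hnA1 _ _ hb0
      have e1 : mu = 0 := h2.1
      have e2 := h2.2
      rw [e1] at e2
      linear_combination -e2
    · have hr := hrAB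
      rw [id4] at hr
      obtain ⟨w', ξ', hrep⟩ := rank1_rep _ hr
      have hα : ξ.comp V ≠ 0 := by
        intro h0
        exact hnB2 0 (by ext x; simp [h0])
      rcases dich_of_rep hb0 hα hrep with ⟨c, hcc⟩ | ⟨c, hcc⟩
      · have : (1 - c*mu) • (U w) + (lam - c*(lam*mu - ξ w)) • w = 0 := by
          linear_combination (norm := module) hcc
        have h2 := indep_pair hw hnA1 _ _ this
        have e1 := h2.1
        have e2 := h2.2
        have hcne : c ≠ 0 := by
          intro h0; rw [h0] at e1; norm_num at e1
        have : c * ξ w = 0 := by linear_combination e2 - lam * e1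
        rcases mul_eq_zero.mp this with h | h
        · exact absurd h hcne
        · exact h
      · have hcne : c ≠ 0 := by
          intro h0
          apply hξ
          ext x
          have := DFunLike.congr_fun hcc x
          rw [h0] at this
          simpa using this
        exfalso
        apply hnB2 c⁻¹
        rw [eq_inv_smul_iff₀ hcne]
        exact hcc.symm
  -- assemble
  rcases dichA with ⟨lam, hl⟩ | ⟨lam, hlf⟩ <;> rcases dichB with ⟨mu, hm⟩ | ⟨mu, hmf⟩
  · exact caseVV lam mu hl hm
  · by_cases hB1 : ∃ c : ℂ, V w = c • w
    · obtain ⟨mu', h⟩ := hB1; exact caseVV lam mu' hl h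
    · by_cases hA2 : ∃ c : ℂ, ξ.comp U = c • ξ
      · obtain ⟨lam', h⟩ := hA2; exact caseFF lam' mu h hmf
      · push_neg at hB1 hA2
        exact caseC3 lam mu hl hmf hB1 hA2
  · by_cases hA1 : ∃ c : ℂ, U w = c • w
    · obtain ⟨lam', h⟩ := hA1; exact caseVV lam' mu h hm
    · by_cases hB2 : ∃ c : ℂ, ξ.comp V = c • ξ
      · obtain ⟨mu', h⟩ := hB2; exact caseFF lam mu' hlf h
      · push_neg at hA1 hB2
        exact caseC4 lam mu hlf hm hA1 hB2
  · exact caseFF lam mu hlf hmf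

lemma neg_sr (α : X →L[ℂ] ℂ) (a : X) : (-α).smulRight a = -(α.smulRight a) := by
  ext x; simp

lemma feq {α β : X →L[ℂ] ℂ} {c : ℂ} (h : α = c • β) (x : X) : α x = c * β x := by
  have := DFunLike.congr_fun h x; simpa using this

lemma trace2 (𝒮 : Set (X →L[ℂ] X)) (hmul : ∀ S ∈ 𝒮, ∀ T ∈ 𝒮, S * T ∈ 𝒮)
    (hrank : ∀ S ∈ 𝒮, ∀ T ∈ 𝒮,
      LinearMap.rank ((S * T - T * S : X →L[ℂ] X) : X →ₗ[ℂ] X) ≤ 1)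
    (U V : X →L[ℂ] X) (hU : U ∈ 𝒮) (hV : V ∈ 𝒮) {a b : X} {α β : X →L[ℂ] ℂ}
    (hcomm : U * V - V * U = α.smulRight a + β.smulRight b) : α a + β b = 0 := by
  have hr := hrank U hU V hV
  rw [hcomm] at hr
  obtain ⟨w, ξ, hrep⟩ := rank1_rep _ hr
  have hξw : ξ w = 0 := part1 𝒮 hmul hrank U V hU hV w ξ (hcomm.trans hrep)
  have h0 : α.smulRight a + β.smulRight b + (-ξ).smulRight w = 0 := by
    rw [hrep, neg_sr]; simp
  have := tr3 h0
  simp only [neg_apply] at this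
  linear_combination this + hξw

lemma trace1 (𝒮 : Set (X →L[ℂ] X)) (hmul : ∀ S ∈ 𝒮, ∀ T ∈ 𝒮, S * T ∈ 𝒮)
    (hrank : ∀ S ∈ 𝒮, ∀ T ∈ 𝒮,
      LinearMap.rank ((S * T - T * S : X →L[ℂ] X) : X →ₗ[ℂ] X) ≤ 1)
    (U V : X →L[ℂ] X) (hU : U ∈ 𝒮) (hV : V ∈ 𝒮) {a : X} {α : X →L[ℂ] ℂ}
    (hcomm : U * V - V * U = α.smulRight a) : α a = 0 := by
  have hcomm' : U * V - V * U = α.smulRight a + (0 : X →L[ℂ] ℂ).smulRight (0 : X) := by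
    rw [hcomm]; ext x; simp
  have := trace2 𝒮 hmul hrank U V hU hV hcomm'
  simpa using this

end Stmt2Aux

open Stmt2Aux in
theorem stmt_2 {X : Type*} [NormedAddCommGroup X] [NormedSpace ℂ X] [CompleteSpace X]
    (𝒮 : Set (X →L[ℂ] X)) (hmul : ∀ S ∈ 𝒮, ∀ T ∈ 𝒮, S * T ∈ 𝒮)
    (hrank : ∀ S ∈ 𝒮, ∀ T ∈ 𝒮, LinearMap.rank ((S * T - T * S : X →L[ℂ] X) : X →ₗ[ℂ] X) ≤ 1)
    (A B : X →L[ℂ] X) (hA : A ∈ 𝒮) (hB : B ∈ 𝒮)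
    (y : X) (φ : X →L[ℂ] ℂ) (hy : y ≠ 0) (hφ : φ ≠ 0)
    (hAB : A * B - B * A = φ.smulRight y) :
    (∀ C ∈ 𝒮, φ (C y) = 0) ∧ φ y = 0 := by
  have hy0 : φ y = 0 := part1 𝒮 hmul hrank A B hA hB y φ hAB
  refine ⟨?_, hy0⟩
  intro C hC
  by_contra hs
  -- representations of the two auxiliary commutators
  obtain ⟨u, g, hK⟩ := rank1_rep _ (hrank C hC B hB)
  obtain ⟨v, h, hN⟩ := rank1_rep _ (hrank A hA C hC)
  -- operator identities
  have idE1 : (C*A)*B - B*(C*A) = φ.smulRight (C y) + (g.comp A).smulRight u := by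
    have e : (C*A)*B - B*(C*A) = C*(A*B - B*A) + (C*B - B*C)*A := by noncomm_ring
    rw [e, hAB, hK, mul_sr, sr_mul]
  have idE2 : A*(B*C) - (B*C)*A = (φ.comp C).smulRight y + h.smulRight (B v) := by
    have e : A*(B*C) - (B*C)*A = (A*B - B*A)*C + B*(A*C - C*A) := by noncomm_ring
    rw [e, hAB, hN, mul_sr, sr_mul]
  have idE3 : (A*C)*B - B*(A*C) = g.smulRight (A u) + (φ.comp C).smulRight y := by
    have e : (A*C)*B - B*(A*C) = A*(C*B - B*C) + (A*B - B*A)*C := by noncomm_ring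
    rw [e, hK, hAB, mul_sr, sr_mul]
  have idE4 : A*(C*B) - (C*B)*A = φ.smulRight (C y) + (h.comp B).smulRight v := by
    have e : A*(C*B) - (C*B)*A = C*(A*B - B*A) + (A*C - C*A)*B := by noncomm_ring
    rw [e, hAB, hN, mul_sr, sr_mul]
  have idE5 : (B*A)*C - C*(B*A) = h.smulRight (B v) + (-(g.comp A)).smulRight u := by
    have e : (B*A)*C - C*(B*A) = B*(A*C - C*A) - (C*B - B*C)*A := by noncomm_ring
    rw [e, hK, hN, mul_sr, sr_mul, neg_sr, sub_eq_add_neg]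
  have idE6 : (A*B)*C - C*(A*B) = (h.comp B).smulRight v + (-g).smulRight (A u) := by
    have e : (A*B)*C - C*(A*B) = (A*C - C*A)*B - A*(C*B - B*C) := by noncomm_ring
    rw [e, hK, hN, mul_sr, sr_mul, neg_sr, sub_eq_add_neg]
  -- scalar facts
  have hgu : g u = 0 := part1 𝒮 hmul hrank C B hC hB u g hK
  have hhv : h v = 0 := part1 𝒮 hmul hrank A C hA hC v h hN
  have trE1 := trace2 𝒮 hmul hrank (C*A) B (hmul C hC A hA) hB idE1
  have hgAu : g (A u) = -(φ (C y)) := by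
    simp only [comp_apply] at trE1; linear_combination trE1
  have trE2 := trace2 𝒮 hmul hrank A (B*C) hA (hmul B hB C hC) idE2
  have hhBv : h (B v) = -(φ (C y)) := by
    simp only [comp_apply] at trE2; linear_combination trE2
  -- nonvanishing
  have hu0 : u ≠ 0 := by
    intro h0; rw [h0] at hgAu; simp at hgAu; exact hs hgAu
  have hv0 : v ≠ 0 := by
    intro h0; rw [h0] at hhBv; simp at hhBv; exact hs hhBv
  have hAu0 : A u ≠ 0 := by
    intro h0; rw [h0] at hgAu; simp at hgAu; exact hs hgAu
  have hBv0 : B v ≠ 0 := by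
    intro h0; rw [h0] at hhBv; simp at hhBv; exact hs hhBv
  have hg0 : g ≠ 0 := by
    intro h0; rw [h0] at hgAu; simp at hgAu; exact hs hgAu
  have hh0 : h ≠ 0 := by
    intro h0; rw [h0] at hhBv; simp at hhBv; exact hs hhBv
  have hz0 : C y ≠ 0 := by
    intro h0; apply hs; rw [h0]; simp
  have hψ0 : φ.comp C ≠ 0 := by
    intro h0
    apply hs
    have := DFunLike.congr_fun h0 y
    simpa using this
  have hhB0 : h.comp B ≠ 0 := by
    intro h0
    have := DFunLike.congr_fun h0 v
    simp only [comp_apply, zero_apply] at this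
    rw [this] at hhBv; exact hs (by linear_combination hhBv)
  -- dichotomies
  have dich1 : (∃ c : ℂ, C y = c • u) ∨ (∃ c : ℂ, g.comp A = c • φ) := by
    have hr := hrank (C*A) (hmul C hC A hA) B hB
    rw [idE1] at hr
    obtain ⟨w', ξ', hrep⟩ := rank1_rep _ hr
    exact dich_of_rep hu0 hφ hrep
  have dich2 : (∃ c : ℂ, y = c • (B v)) ∨ (∃ c : ℂ, h = c • (φ.comp C)) := by
    have hr := hrank A hA (B*C) (hmul B hB C hC)
    rw [idE2] at hr
    obtain ⟨w', ξ', hrep⟩ := rank1_rep _ hr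
    exact dich_of_rep hBv0 hψ0 hrep
  have dich3 : (∃ c : ℂ, A u = c • y) ∨ (∃ c : ℂ, φ.comp C = c • g) := by
    have hr := hrank (A*C) (hmul A hA C hC) B hB
    rw [idE3] at hr
    obtain ⟨w', ξ', hrep⟩ := rank1_rep _ hr
    exact dich_of_rep hy hg0 hrep
  have dich4 : (∃ c : ℂ, C y = c • v) ∨ (∃ c : ℂ, h.comp B = c • φ) := by
    have hr := hrank A hA (C*B) (hmul C hC B hB)
    rw [idE4] at hr
    obtain ⟨w', ξ', hrep⟩ := rank1_rep _ hr
    exact dich_of_rep hv0 hφ hrep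
  have dich5 : (∃ c : ℂ, B v = c • u) ∨ (∃ c : ℂ, -(g.comp A) = c • h) := by
    have hr := hrank (B*A) (hmul B hB A hA) C hC
    rw [idE5] at hr
    obtain ⟨w', ξ', hrep⟩ := rank1_rep _ hr
    exact dich_of_rep hu0 hh0 hrep
  have dich6 : (∃ c : ℂ, v = c • (A u)) ∨ (∃ c : ℂ, -g = c • (h.comp B)) := by
    have hr := hrank (A*B) (hmul A hA B hB) C hC
    rw [idE6] at hr
    obtain ⟨w', ξ', hrep⟩ := rank1_rep _ hr
    exact dich_of_rep hAu0 hhB0 hrep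
  -- Jacobi identity, vector form at y and functional form
  have idJ : (φ.comp C).smulRight y - φ.smulRight (C y)
      = ((g.comp A).smulRight u - g.smulRight (A u))
        + ((h.comp B).smulRight v - h.smulRight (B v)) := by
    have e : (A*B - B*A)*C - C*(A*B - B*A)
        = ((C*B - B*C)*A - A*(C*B - B*C)) + ((A*C - C*A)*B - B*(A*C - C*A)) := by
      noncomm_ring
    rw [hAB, hK, hN] at e
    simpa only [mul_sr, sr_mul] using e
  have vecJ1 : φ (C y) • y
      = g (A y) • u - g y • (A u) + (h (B y) • v - h y • (B v)) := by
    have := DFunLike.congr_fun idJ y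
    simp only [sub_apply, add_apply, smulRight_apply, comp_apply] at this
    rw [hy0] at this
    simpa using this
  have funJ2 : ∀ x : X, -(φ x * φ (C y))
      = g (A x) * φ u - g x * φ (A u) + (h (B x) * φ v - h x * φ (B v)) := by
    intro x
    have := congrArg φ (DFunLike.congr_fun idJ x)
    simp only [sub_apply, add_apply, smulRight_apply, comp_apply, map_add, map_sub,
      map_smul, smul_eq_mul] at this
    rw [hy0] at this
    linear_combination this
  -- M1 : the double-parallel contradiction
  have M1 : ∀ d f : ℂ, φ.comp C = d • g → h = f • (φ.comp C) → False := by
    intro d f hdg hfψ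
    have hdgx : ∀ x, φ (C x) = d * g x := by
      intro x; have := feq hdg x; simpa using this
    have hfx : ∀ x, h x = f * φ (C x) := by
      intro x; have := feq hfψ x; simpa using this
    have hf0 : f ≠ 0 := by
      intro h0; apply hh0; ext x; rw [hfx x, h0]; simp
    have q1 : φ (C u) = 0 := by rw [hdgx u, hgu, mul_zero]
    have q2 : φ (C (A u)) = d * -(φ (C y)) := by rw [hdgx (A u), hgAu]
    have q3 : φ (C v) = 0 := by
      have := hfx v
      rw [hhv] at this
      rcases mul_eq_zero.mp this.symm with h' | h'
      · exact absurd h' hf0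
      · exact h'
    have q4 : φ (C y) = d * g y := hdgx y
    have q5 : h y = f * φ (C y) := hfx y
    have q6 : f * φ (C (B v)) = -(φ (C y)) := by rw [← hfx (B v), hhBv]
    have E := congrArg (fun t => φ (C t)) vecJ1
    simp only [map_smul, map_sub, map_add, smul_eq_mul] at E
    rw [q1, q2, q3, q5] at E
    apply hs
    have hss : φ (C y) * φ (C y) = 0 := by
      linear_combination (φ (C y)) * q4 + (φ (C y)) * q6 - E
    exact mul_self_eq_zero.mp hss
  by_cases hzu : ∃ ρ : ℂ, C y = ρ • u
  · obtain ⟨ρ, hρ⟩ := hzu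
    have hρ0 : ρ ≠ 0 := by
      intro h0; rw [h0, zero_smul] at hρ; exact hz0 hρ
    have hφu : φ (C y) = ρ * φ u := by rw [hρ]; simp
    have hgz : g (C y) = 0 := by rw [hρ]; simp [hgu]
    rcases dich4 with ⟨e, hev⟩ | ⟨c', hc'⟩
    · -- CASE 1' : C y = e • v
      have he0 : e ≠ 0 := by
        intro h0; rw [h0, zero_smul] at hev; exact hz0 hev
      have hveq : v = e⁻¹ • (C y) := by rw [hev, smul_smul]; simp [he0]
      have hhz : h (C y) = 0 := by rw [hev]; simp [hhv]
      have hhu : h u = 0 := by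
        have h1 : h (C y) = ρ * h u := by rw [hρ]; simp
        rw [hhz] at h1
        rcases mul_eq_zero.mp h1.symm with h' | h'
        · exact absurd h' hρ0
        · exact h'
      have hgv : g v = 0 := by rw [hveq]; simp [hgz]
      rcases dich3 with ⟨a', ha'⟩ | ⟨d, hdg⟩
      · -- 1b : A u = a' • y
        have hga : a' * g y = -(φ (C y)) := by
          rw [← hgAu, ha']; simp
        rcases dich6 with ⟨c₅, hc₅⟩ | ⟨c₆, hc₆⟩
        · -- v = c₅ • A u
          apply hs
          have hCy : C y = (e * (c₅ * a')) • y := by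
            rw [hev, hc₅, ha', smul_smul, smul_smul, mul_assoc]
          rw [hCy]; simp [hy0]
        · -- -g = c₆ • (h.comp B)
          have hev6 := feq hc₆ v
          simp only [neg_apply, comp_apply] at hev6
          rw [hgv, hhBv] at hev6
          have hc₆0 : c₆ = 0 := by
            rcases mul_eq_zero.mp (by linear_combination hev6 : c₆ * φ (C y) = 0) with h' | h'
            · exact h'
            · exact absurd h' hs
          rw [hc₆0] at hc₆
          have : g (A u) = 0 := by
            have := feq hc₆ (A u)
            simp only [neg_apply, comp_apply, zero_mul] at this
            linear_combination -this
          rw [this] at hgAu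
          exact hs (by linear_combination hgAu)
      · -- 1a : φ.comp C = d • g
        have hdgx : ∀ x, φ (C x) = d * g x := by
          intro x; have := feq hdg x; simpa using this
        rcases dich2 with ⟨b', hb'⟩ | ⟨f, hfψ⟩
        · -- y = b' • B v
          have hb'0 : b' ≠ 0 := by
            intro h0; rw [h0, zero_smul] at hb'; exact hy hb'
          have q1 : φ (C u) = 0 := by rw [hdgx u, hgu, mul_zero]
          have q2 : φ (C (A u)) = d * -(φ (C y)) := by rw [hdgx (A u), hgAu]
          have q3 : φ (C v) = 0 := by rw [hdgx v, hgv, mul_zero]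
          have q4 : φ (C y) = d * g y := hdgx y
          have q5 : h y = b' * -(φ (C y)) := by
            conv_lhs => rw [hb']
            simp [hhBv]
          have q6 : φ (C y) = b' * φ (C (B v)) := by
            conv_lhs => rw [hb']
            simp
          have E := congrArg (fun t => φ (C t)) vecJ1
          simp only [map_smul, map_sub, map_add, smul_eq_mul] at E
          rw [q1, q2, q3, q5] at E
          apply hs
          have hss : φ (C y) * φ (C y) = 0 := by
            linear_combination (φ (C y)) * q4 + (φ (C y)) * q6 - E
          exact mul_self_eq_zero.mp hss
        · exact M1 d f hdg hfψ
    · -- CASE 2' : h.comp B = c' • φ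
      have hhBx : ∀ x, h (B x) = c' * φ x := by
        intro x; have := feq hc' x; simpa using this
      have hφv : c' * φ v = -(φ (C y)) := by rw [← hhBv, hhBx v]
      have hhBy : h (B y) = 0 := by rw [hhBx y, hy0, mul_zero]
      rcases dich3 with ⟨a', ha'⟩ | ⟨d, hdg⟩
      · -- 2b : A u = a' • y
        have hga : a' * g y = -(φ (C y)) := by
          rw [← hgAu, ha']; simp
        rcases dich6 with ⟨c₅, hc₅⟩ | ⟨c₆, hc₆⟩
        · -- v = c₅ • A u = (c₅ a') • y
          have hφv0 : φ v = 0 := by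
            rw [hc₅, ha', smul_smul]; simp [hy0]
          rw [hφv0, mul_zero] at hφv
          exact hs (by linear_combination hφv)
        · -- -g = c₆ • hB
          have hgy0 : g y = 0 := by
            have := feq hc₆ y
            simp only [neg_apply, comp_apply] at this
            rw [hhBy, mul_zero] at this
            linear_combination -this
          rw [hgy0, mul_zero] at hga
          exact hs (by linear_combination hga)
      · -- 2a : φ.comp C = d • g
        have hdgx : ∀ x, φ (C x) = d * g x := by
          intro x; have := feq hdg x; simpa using this
        rcases dich2 with ⟨b', hb'⟩ | ⟨f, hfψ⟩
        · have hb'0 : b' ≠ 0 := by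
            intro h0; rw [h0, zero_smul] at hb'; exact hy hb'
          have q1 : φ (C u) = 0 := by rw [hdgx u, hgu, mul_zero]
          have q2 : φ (C (A u)) = d * -(φ (C y)) := by rw [hdgx (A u), hgAu]
          have q4 : φ (C y) = d * g y := hdgx y
          have q5 : h y = b' * -(φ (C y)) := by
            conv_lhs => rw [hb']
            simp [hhBv]
          have q6 : φ (C y) = b' * φ (C (B v)) := by
            conv_lhs => rw [hb']
            simp
          have E := congrArg (fun t => φ (C t)) vecJ1
          simp only [map_smul, map_sub, map_add, smul_eq_mul] at E
          rw [q1, q2, hhBy, q5] at E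
          apply hs
          have hss : φ (C y) * φ (C y) = 0 := by
            linear_combination (φ (C y)) * q4 + (φ (C y)) * q6 - E
          exact mul_self_eq_zero.mp hss
        · exact M1 d f hdg hfψ
  · -- CASE : C y is NOT a multiple of u
    push_neg at hzu
    have hind := indep_pair hu0 hzu
    have hcφ : ∃ c : ℂ, g.comp A = c • φ := by
      rcases dich1 with ⟨ρ, hρ⟩ | hgood
      · exact absurd hρ (hzu ρ)
      · exact hgood
    obtain ⟨c, hcφ⟩ := hcφ
    have hgAx : ∀ x, g (A x) = c * φ x := by
      intro x; have := feq hcφ x; simpa using this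
    have hφu : c * φ u = -(φ (C y)) := by
      have hcol : (C*A)*B - B*(C*A) = φ.smulRight (C y + c • u) := by
        rw [idE1, hcφ]
        ext x
        simp [smul_add, smul_smul, mul_comm]
      have := trace1 𝒮 hmul hrank (C*A) B (hmul C hC A hA) hB hcol
      simp only [map_add, map_smul, smul_eq_mul] at this
      linear_combination this
    have hc0 : c ≠ 0 := by
      intro h0; rw [h0, zero_mul] at hφu; exact hs (by linear_combination hφu)
    have hφu0 : φ u ≠ 0 := by
      intro h0; rw [h0, mul_zero] at hφu; exact hs (by linear_combination hφu)
    rcases dich4 with ⟨e, hev⟩ | ⟨c', hc'⟩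
    · -- CASE 3 : C y = e • v
      have he0 : e ≠ 0 := by
        intro h0; rw [h0, zero_smul] at hev; exact hz0 hev
      have hveq : v = e⁻¹ • (C y) := by rw [hev, smul_smul]; simp [he0]
      rcases dich2 with ⟨b', hb'⟩ | ⟨f, hfψ⟩
      · -- 3b : y = b' • B v
        have hb'0 : b' ≠ 0 := by
          intro h0; rw [h0, zero_smul] at hb'; exact hy hb'
        have hφBv : φ (B v) = 0 := by
          have h1 : φ y = b' * φ (B v) := by
            conv_lhs => rw [hb']
            simp
          rw [hy0] at h1
          rcases mul_eq_zero.mp h1.symm with h' | h'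
          · exact absurd h' hb'0
          · exact h'
        have hhy : h y = b' * -(φ (C y)) := by
          conv_lhs => rw [hb']
          simp [hhBv]
        have hhy0 : h y ≠ 0 := by
          rw [hhy]
          simp only [ne_eq, mul_eq_zero, neg_eq_zero, not_or]
          exact ⟨hb'0, hs⟩
        rcases dich5 with ⟨ρ'', hBvu⟩ | ⟨c₈, hc₈⟩
        · -- B v = ρ'' • u
          have : φ (B v) = ρ'' * φ u := by rw [hBvu]; simp
          rw [hφBv] at this
          rcases mul_eq_zero.mp this.symm with h' | h'
          · rw [h', zero_smul] at hBvu; exact hBv0 hBvu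
          · exact hφu0 h'
        · -- -(g.comp A) = c₈ • h
          have h1 := feq hc₈ y
          simp only [neg_apply, comp_apply] at h1
          rw [hgAx y, hy0, mul_zero] at h1
          have hc₈0 : c₈ = 0 := by
            rcases mul_eq_zero.mp (by linear_combination -h1 : c₈ * h y = 0) with h' | h'
            · exact h'
            · exact absurd h' hhy0
          rw [hc₈0] at hc₈
          have h2 := feq hc₈ u
          simp only [neg_apply, comp_apply, zero_mul] at h2
          rw [hgAu] at h2
          exact hs (by linear_combination h2)
      · -- 3a : h = f • (φ.comp C)
        have hfx : ∀ x, h x = f * φ (C x) := by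
          intro x; have := feq hfψ x; simpa using this
        have hf0 : f ≠ 0 := by
          intro h0; apply hh0; ext x; rw [hfx x, h0]; simp
        rcases dich3 with ⟨a', ha'⟩ | ⟨d, hdg⟩
        · -- III-v : A u = a' • y
          have hga : a' * g y = -(φ (C y)) := by
            rw [← hgAu, ha']; simp
          have hgy0 : g y ≠ 0 := by
            intro h0; rw [h0, mul_zero] at hga; exact hs (by linear_combination hga)
          rcases dich6 with ⟨c₅, hc₅⟩ | ⟨c₆, hc₆⟩
          · -- v = c₅ • A u  ⇒  C y multiple of y : contra with φ
            apply hs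
            have hCy : C y = (e * c₅ * a') • y := by
              rw [hev, hc₅, ha', smul_smul, smul_smul]
            rw [hCy]; simp [hy0]
          · -- -g = c₆ • (h.comp B)
            have hgyBy : -(g y) = c₆ * h (B y) := by
              have := feq hc₆ y; simpa using this
            have hhBy0 : h (B y) ≠ 0 := by
              intro h0; rw [h0, mul_zero] at hgyBy
              exact hgy0 (by linear_combination -hgyBy)
            rcases dich5 with ⟨ρ'', hBvu⟩ | ⟨c₈, hc₈⟩
            · -- B v = ρ'' • u : the vector computation via vecJ1
              have V := vecJ1
              rw [ha', hBvu, hveq] at V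
              have hsy : g y • (a' • y) = -((φ (C y)) • y) := by
                rw [smul_smul, show g y * a' = -(φ (C y)) by linear_combination hga,
                  neg_smul]
              rw [hsy] at V
              have V2 : (h (B y) * e⁻¹) • (C y) + (g (A y) - h y * ρ'') • u = 0 := by
                linear_combination (norm := module) -V
              have hPQ := hind _ _ V2
              have : h (B y) = 0 := by
                rcases mul_eq_zero.mp hPQ.1 with h' | h'
                · exact h'
                · exact absurd h' (inv_ne_zero he0)
              exact hhBy0 this
            · -- -(g.comp A) = c₈ • h : contradiction at y
              have h1 := feq hc₈ y
              simp only [neg_apply, comp_apply] at h1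
              rw [hgAx y, hy0, mul_zero, hfx y] at h1
              have : c₈ * (f * φ (C y)) = 0 := by linear_combination -h1
              rcases mul_eq_zero.mp this with h' | h'
              · rw [h'] at hc₈
                have h2 := feq hc₈ u
                simp only [neg_apply, comp_apply, zero_mul] at h2
                rw [hgAu] at h2
                exact hs (by linear_combination h2)
              · rcases mul_eq_zero.mp h' with h'' | h''
                · exact hf0 h''
                · exact hs h''
        · exact M1 d f hdg hfψ
    · -- CASE 4 : h.comp B = c' • φ
      have hhBx : ∀ x, h (B x) = c' * φ x := by
        intro x; have := feq hc' x; simpa using this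
      have hφv : c' * φ v = -(φ (C y)) := by rw [← hhBv, hhBx v]
      have hc'0 : c' ≠ 0 := by
        intro h0; rw [h0, zero_mul] at hφv; exact hs (by linear_combination hφv)
      have hφv0 : φ v ≠ 0 := by
        intro h0; rw [h0, mul_zero] at hφv; exact hs (by linear_combination hφv)
      have star : ∀ x, φ (A u) * g x + φ (B v) * h x = -(φ (C y) * φ x) := by
        intro x
        have hJ := funJ2 x
        rw [hgAx x, hhBx x] at hJ
        linear_combination hJ + φ x * hφu + φ x * hφv
      have sU := star u
      rw [hgu, mul_zero, zero_add] at sU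
      have hφBv0 : φ (B v) ≠ 0 := by
        intro h0; rw [h0, zero_mul] at sU
        have : φ (C y) * φ u = 0 := by linear_combination sU
        rcases mul_eq_zero.mp this with h' | h'
        · exact hs h'
        · exact hφu0 h'
      have sV := star v
      rw [hhv, mul_zero, add_zero] at sV
      have hφAu0 : φ (A u) ≠ 0 := by
        intro h0; rw [h0, zero_mul] at sV
        have : φ (C y) * φ v = 0 := by linear_combination sV
        rcases mul_eq_zero.mp this with h' | h'
        · exact hs h'
        · exact hφv0 h'
      -- dich5 must be vector branch
      have hBvu : ∃ ρ'' : ℂ, B v = ρ'' • u := by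
        rcases dich5 with hgood | ⟨c₈, hc₈⟩
        · exact hgood
        · exfalso
          have h1 := feq hc₈ v
          simp only [neg_apply, comp_apply] at h1
          rw [hgAx v, hhv, mul_zero] at h1
          have : c * φ v = 0 := by linear_combination -h1
          rcases mul_eq_zero.mp this with h' | h'
          · exact hc0 h'
          · exact hφv0 h'
      obtain ⟨ρ'', hBvu⟩ := hBvu
      have hρ''0 : ρ'' ≠ 0 := by
        intro h0; rw [h0, zero_smul] at hBvu; exact hBv0 hBvu
      -- dich6 must be vector branch
      have hvAu : ∃ c₅ : ℂ, v = c₅ • A u := by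
        rcases dich6 with hgood | ⟨c₆, hc₆⟩
        · exact hgood
        · exfalso
          have h1 := feq hc₆ u
          simp only [neg_apply, comp_apply] at h1
          rw [hgu, hhBx u] at h1
          have : c₆ * (c' * φ u) = 0 := by linear_combination -h1
          rcases mul_eq_zero.mp this with h' | h'
          · rw [h'] at hc₆
            have h2 := feq hc₆ (A u)
            simp only [neg_apply, comp_apply, zero_mul] at h2
            rw [hgAu] at h2
            exact hs (by linear_combination h2)
          · rcases mul_eq_zero.mp h' with h'' | h''
            · exact hc'0 h''
            · exact hφu0 h''
      obtain ⟨c₅, hc₅⟩ := hvAu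
      have hc₅0 : c₅ ≠ 0 := by
        intro h0; rw [h0, zero_smul] at hc₅; exact hv0 hc₅
      -- dich2 must be functional branch
      have hfψ : ∃ f : ℂ, h = f • (φ.comp C) := by
        rcases dich2 with ⟨b', hb'⟩ | hgood
        · exfalso
          have : φ y = b' * (ρ'' * φ u) := by
            conv_lhs => rw [hb', hBvu]
            simp [mul_comm]
          rw [hy0] at this
          have hb'0 : b' ≠ 0 := by
            intro h0; rw [h0, zero_smul] at hb'; exact hy hb'
          rcases mul_eq_zero.mp this.symm with h' | h'
          · exact hb'0 h'
          · rcases mul_eq_zero.mp h' with h'' | h''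
            · exact hρ''0 h''
            · exact hφu0 h''
        · exact hgood
      obtain ⟨f, hfψ⟩ := hfψ
      have hfx : ∀ x, h x = f * φ (C x) := by
        intro x; have := feq hfψ x; simpa using this
      have hf0 : f ≠ 0 := by
        intro h0; apply hh0; ext x; rw [hfx x, h0]; simp
      have hψv : φ (C v) = 0 := by
        have := hfx v
        rw [hhv] at this
        rcases mul_eq_zero.mp this.symm with h' | h'
        · exact absurd h' hf0
        · exact h'
      -- dich3 must be functional branch
      rcases dich3 with ⟨a', ha'⟩ | ⟨d, hdg⟩
      · exfalso
        have : φ (C v) = c₅ * (a' * φ (C y)) := by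
          conv_lhs => rw [hc₅, ha']
          simp [mul_comm]
        rw [hψv] at this
        have ha'0 : a' ≠ 0 := by
          intro h0; rw [h0, zero_smul] at ha'; exact hAu0 ha'
        rcases mul_eq_zero.mp this.symm with h' | h'
        · exact hc₅0 h'
        · rcases mul_eq_zero.mp h' with h'' | h''
          · exact ha'0 h''
          · exact hs h''
      · exact M1 d f hdg hfψ
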